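/- Every finitary deductive system over a countable set of formulas can be conservatively translated into classical propositional logic CPC; i.e., CPC is universal. -/

import Mathlib

/-- Formulas of classical propositional logic over countably many variables. -/
inductive PropForm : Type
  | var : ℕ → PropForm
  | bot : PropForm
  | top : PropForm
  | neg : PropForm → PropForm
  | and : PropForm → PropForm → PropForm
  | or : PropForm → PropForm → PropForm
  | imp : PropForm → PropForm → PropForm

/-- Boolean evaluation of a formula under a valuation. -/
def PropForm.eval (v : ℕ → Bool) : PropForm → Bool
  | .var n => v n
  | .bot => false
  | .top => true
  | .neg φ => !(φ.eval v)
  | .and φ ψ => φ.eval v && ψ.eval v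
  | .or φ ψ => φ.eval v || ψ.eval v
  | .imp φ ψ => !(φ.eval v) || ψ.eval v

/-- Classical propositional consequence. -/
def Cpc (Γ : Set PropForm) (φ : PropForm) : Prop :=
  ∀ v : ℕ → Bool, (∀ ψ ∈ Γ, ψ.eval v = true) → φ.eval v = true

/-- A Tarski-style deductive system. -/
structure DeductiveSystem (F : Type*) where
  Thm : Set F → F → Prop
  refl : ∀ φ : F, Thm {φ} φ
  mono : ∀ {Γ Γ' : Set F} {φ : F}, Thm Γ φ → Γ ⊆ Γ' → Thm Γ' φ
  cut : ∀ {Γ Δ : Set F} {φ : F}, Thm Γ φ → (∀ ψ ∈ Γ, Thm Δ ψ) → Thm Δ φ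

/-- Finitarity. -/
def DeductiveSystem.Finitary {F : Type*} (L : DeductiveSystem F) : Prop :=
  ∀ (Γ : Set F) (φ : F), L.Thm Γ φ → ∃ Γ' ⊆ Γ, Γ'.Finite ∧ L.Thm Γ' φ

namespace CpcUniv

/-! Auxiliary list conjunction/disjunction. -/

def listConj : List PropForm → PropForm
  | [] => .top
  | a :: l => .and a (listConj l)

def listDisj : List PropForm → PropForm
  | [] => .bot
  | a :: l => .or a (listDisj l)

lemma eval_listConj (v : ℕ → Bool) :
    ∀ l : List PropForm, (listConj l).eval v = true ↔ ∀ a ∈ l, a.eval v = true := by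
  intro l
  induction l with
  | nil => simp [listConj, PropForm.eval]
  | cons a l ih => simp [listConj, PropForm.eval, ih]

lemma eval_listDisj (v : ℕ → Bool) :
    ∀ l : List PropForm, (listDisj l).eval v = true ↔ ∃ a ∈ l, a.eval v = true := by
  intro l
  induction l with
  | nil => simp [listDisj, PropForm.eval]
  | cons a l ih => simp [listDisj, PropForm.eval, ih]

variable {F : Type} (L : DeductiveSystem F) (e : F → ℕ)

open Classical in
/-- The list of all formulas of index `< n`. -/
noncomputable def lowList (n : ℕ) : List F :=
  (List.range n).filterMap fun m => if h : ∃ φ : F, e φ = m then some h.choose else none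

lemma mem_lowList (he : Function.Injective e) {n : ℕ} {ψ : F} :
    ψ ∈ lowList e n ↔ e ψ < n := by
  constructor
  · intro h
    rw [lowList, List.mem_filterMap] at h
    obtain ⟨m, hm, heq⟩ := h
    rw [List.mem_range] at hm
    split at heq
    · rename_i hh
      have h1 : hh.choose = ψ := by exact Option.some_injective _ heq
      have h2 : e hh.choose = m := hh.choose_spec
      rw [h1] at h2
      omega
    · simp at heq
  · intro h
    rw [lowList, List.mem_filterMap]
    refine ⟨e ψ, List.mem_range.mpr h, ?_⟩
    have hh : ∃ φ : F, e φ = e ψ := ⟨ψ, rfl⟩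
    rw [dif_pos hh]
    have : hh.choose = ψ := he hh.choose_spec
    rw [this]

open Classical in
/-- One step of the recursive definition of the translation. -/
noncomputable def G (g : ℕ → PropForm) (n : ℕ) : PropForm :=
  if hn : ∃ φ : F, e φ = n then
    .and
      (.or (.var n)
        (listDisj ((lowList e n).sublists.map fun Δ =>
          if L.Thm {x | x ∈ Δ} hn.choose then listConj (Δ.map fun ψ => g (e ψ)) else .bot)))
      (listConj ((lowList e n).sublists.flatMap fun Δ => (lowList e n).map fun χ =>
          if L.Thm (insert hn.choose {x | x ∈ Δ}) χ then
            .imp (listConj (Δ.map fun ψ => g (e ψ))) (g (e χ))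
          else .top))
  else .top

lemma G_congr (he : Function.Injective e) {g₁ g₂ : ℕ → PropForm} {n : ℕ}
    (h : ∀ m < n, g₁ m = g₂ m) : G L e g₁ n = G L e g₂ n := by
  rw [G, G]
  split
  · rename_i hn
    have hlow : ∀ ψ ∈ lowList e n, g₁ (e ψ) = g₂ (e ψ) := fun ψ hψ =>
      h _ ((mem_lowList e he).mp hψ)
    have hΔ : ∀ Δ : List F, Δ.Sublist (lowList e n) →
        (Δ.map fun ψ => g₁ (e ψ)) = Δ.map fun ψ => g₂ (e ψ) := by
      intro Δ hΔ
      exact List.map_congr_left fun ψ hψ => hlow ψ (hΔ.subset hψ)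
    congr 1
    · congr 1
      congr 1
      apply List.map_congr_left
      intro Δ hΔmem
      rw [List.mem_sublists] at hΔmem
      rw [hΔ Δ hΔmem]
    · congr 1
      apply List.flatMap_congr
      intro Δ hΔmem
      rw [List.mem_sublists] at hΔmem
      apply List.map_congr_left
      intro χ hχ
      rw [hΔ Δ hΔmem, hlow χ hχ]
  · rfl

noncomputable def gfun : ℕ → PropForm :=
  WellFounded.fix Nat.lt_wfRel.wf fun n rec =>
    G L e (fun m => if h : m < n then rec m h else .top) n

lemma gfun_eq (he : Function.Injective e) (n : ℕ) :
    gfun L e n = G L e (gfun L e) n := by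
  rw [gfun, WellFounded.fix_eq]
  exact G_congr L e he fun m hm => by rw [dif_pos hm]

/-- The conservative translation. -/
noncomputable def tr (φ : F) : PropForm := gfun L e (e φ)

lemma eval_imp (v : ℕ → Bool) (a b : PropForm) :
    (PropForm.imp a b).eval v = true ↔ (a.eval v = true → b.eval v = true) := by
  simp only [PropForm.eval]
  cases a.eval v <;> simp

lemma tr_eval (he : Function.Injective e) (v : ℕ → Bool) (φ : F) :
    (tr L e φ).eval v = true ↔
      ((v (e φ) = true ∨ ∃ Γ : Set F, Γ.Finite ∧ (∀ ψ ∈ Γ, e ψ < e φ) ∧ L.Thm Γ φ ∧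
          ∀ ψ ∈ Γ, (tr L e ψ).eval v = true) ∧
        ∀ Γ : Set F, Γ.Finite → (∀ ψ ∈ Γ, e ψ < e φ) → ∀ χ : F, e χ < e φ →
          L.Thm (insert φ Γ) χ → (∀ ψ ∈ Γ, (tr L e ψ).eval v = true) →
            (tr L e χ).eval v = true) := by
  classical
  have hn : ∃ ψ : F, e ψ = e φ := ⟨φ, rfl⟩
  have hch : hn.choose = φ := he hn.choose_spec
  simp only [tr]
  rw [gfun_eq L e he (e φ), G, dif_pos hn, hch]
  simp only [PropForm.eval, Bool.and_eq_true, Bool.or_eq_true]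
  apply and_congr
  · apply or_congr Iff.rfl
    rw [eval_listDisj]
    constructor
    · rintro ⟨a, ha, hev⟩
      rw [List.mem_map] at ha
      obtain ⟨Δ, hΔ, rfl⟩ := ha
      rw [List.mem_sublists] at hΔ
      split_ifs at hev with hT
      · rw [eval_listConj] at hev
        refine ⟨{x | x ∈ Δ}, Δ.finite_toSet, ?_, hT, ?_⟩
        · intro ψ hψ
          exact (mem_lowList e he).mp (hΔ.subset hψ)
        · intro ψ hψ
          exact hev _ (List.mem_map.mpr ⟨ψ, hψ, rfl⟩)
      · simp [PropForm.eval] at hev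
    · rintro ⟨Γ, hfin, hidx, hT, hev⟩
      set Δ : List F := (lowList e (e φ)).filter (fun x => decide (x ∈ Γ)) with hΔdef
      have hΔsub : Δ.Sublist (lowList e (e φ)) := List.filter_sublist
      have hset : {x | x ∈ Δ} = Γ := by
        ext x
        simp only [Set.mem_setOf_eq, hΔdef, List.mem_filter, decide_eq_true_eq]
        constructor
        · exact fun h => h.2
        · exact fun h => ⟨(mem_lowList e he).mpr (hidx x h), h⟩
      refine ⟨_, List.mem_map.mpr ⟨Δ, List.mem_sublists.mpr hΔsub, rfl⟩, ?_⟩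
      rw [if_pos (by rw [hset]; exact hT), eval_listConj]
      intro a ha
      rw [List.mem_map] at ha
      obtain ⟨ψ, hψ, rfl⟩ := ha
      exact hev ψ (by rw [← hset]; exact hψ)
  · rw [eval_listConj]
    constructor
    · intro h Γ hfin hidx χ hχ hT hev
      set Δ : List F := (lowList e (e φ)).filter (fun x => decide (x ∈ Γ)) with hΔdef
      have hΔsub : Δ.Sublist (lowList e (e φ)) := List.filter_sublist
      have hset : {x | x ∈ Δ} = Γ := by
        ext x
        simp only [Set.mem_setOf_eq, hΔdef, List.mem_filter, decide_eq_true_eq]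
        constructor
        · exact fun h => h.2
        · exact fun h => ⟨(mem_lowList e he).mpr (hidx x h), h⟩
      have hmem : (if L.Thm (insert φ {x | x ∈ Δ}) χ then
          PropForm.imp (listConj (Δ.map fun ψ => gfun L e (e ψ))) (gfun L e (e χ))
          else PropForm.top) ∈
          (lowList e (e φ)).sublists.flatMap fun Δ' => (lowList e (e φ)).map fun χ' =>
            if L.Thm (insert φ {x | x ∈ Δ'}) χ' then
              PropForm.imp (listConj (Δ'.map fun ψ => gfun L e (e ψ))) (gfun L e (e χ'))
            else PropForm.top := by
        rw [List.mem_flatMap]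
        exact ⟨Δ, List.mem_sublists.mpr hΔsub,
          List.mem_map.mpr ⟨χ, (mem_lowList e he).mpr hχ, rfl⟩⟩
      have h2 := h _ hmem
      rw [if_pos (by rw [hset]; exact hT), eval_imp] at h2
      apply h2
      rw [eval_listConj]
      intro a ha
      rw [List.mem_map] at ha
      obtain ⟨ψ, hψ, rfl⟩ := ha
      exact hev ψ (by rw [← hset]; exact hψ)
    · intro h a ha
      rw [List.mem_flatMap] at ha
      obtain ⟨Δ, hΔ, ha2⟩ := ha
      rw [List.mem_map] at ha2
      obtain ⟨χ, hχ, rfl⟩ := ha2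
      rw [List.mem_sublists] at hΔ
      split_ifs with hT
      · rw [eval_imp]
        intro hc
        rw [eval_listConj] at hc
        apply h {x | x ∈ Δ} Δ.finite_toSet
          (fun ψ hψ => (mem_lowList e he).mp (hΔ.subset hψ)) χ
          ((mem_lowList e he).mp hχ) hT
        intro ψ hψ
        exact hc _ (List.mem_map.mpr ⟨ψ, hψ, rfl⟩)
      · rfl

lemma keyA (he : Function.Injective e) :
    ∀ n : ℕ, ∀ φ : F, e φ < n → ∀ Γ : Set F, Γ.Finite → L.Thm Γ φ →
      ∀ v : ℕ → Bool, (∀ ψ ∈ Γ, (tr L e ψ).eval v = true) → (tr L e φ).eval v = true := by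
  intro n
  induction n with
  | zero => omega
  | succ n ih =>
    intro φ hφn Γ hfin hT v hv
    by_cases hmem : φ ∈ Γ
    · exact hv φ hmem
    by_cases hcase : ∀ ψ ∈ Γ, e ψ < e φ
    · rw [tr_eval L e he]
      refine ⟨Or.inr ⟨Γ, hfin, hcase, hT, hv⟩, ?_⟩
      intro Γ' hfin' hidx' χ hχ hTχ hv'
      have hTc : L.Thm (Γ ∪ Γ') χ := by
        apply L.cut hTχ
        intro ψ hψ
        rw [Set.mem_insert_iff] at hψ
        rcases hψ with rfl | h2
        · exact L.mono hT Set.subset_union_left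
        · exact L.mono (L.refl ψ) (Set.singleton_subset_iff.mpr (Or.inr h2))
      apply ih χ (by omega) (Γ ∪ Γ') (hfin.union hfin') hTc v
      intro ψ hψ
      rcases hψ with h | h
      · exact hv ψ h
      · exact hv' ψ h
    · push_neg at hcase
      obtain ⟨ψ₀, hψ₀, hψ₀e⟩ := hcase
      obtain ⟨ψs, hψs, hmax⟩ := Set.exists_max_image Γ e hfin ⟨ψ₀, hψ₀⟩
      have hlt : e φ < e ψs := by
        rcases lt_or_eq_of_le (le_trans hψ₀e (hmax ψ₀ hψ₀)) with h | h
        · exact h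
        · exact absurd (he h ▸ hψs) hmem
      have hins : insert ψs {ρ ∈ Γ | e ρ < e ψs} = Γ := by
        ext ρ
        rw [Set.mem_insert_iff]
        constructor
        · rintro (rfl | ⟨h1, _⟩)
          · exact hψs
          · exact h1
        · intro hρ
          by_cases hρs : ρ = ψs
          · exact Or.inl hρs
          · exact Or.inr ⟨hρ, lt_of_le_of_ne (hmax ρ hρ) fun hh => hρs (he hh)⟩
      have hstr := (tr_eval L e he v ψs).mp (hv ψs hψs)
      apply hstr.2 {ρ ∈ Γ | e ρ < e ψs} (hfin.subset (Set.sep_subset _ _))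
        (fun ρ hρ => hρ.2) φ hlt
      · rw [hins]; exact hT
      · intro ρ hρ
        exact hv ρ hρ.1

lemma keyB (he : Function.Injective e) (Γ₀ : Set F) (v : ℕ → Bool)
    (hv : ∀ n, v n = true ↔ ∃ ψ : F, e ψ = n ∧ L.Thm Γ₀ ψ) :
    ∀ n : ℕ, ∀ φ : F, e φ < n → ((tr L e φ).eval v = true ↔ L.Thm Γ₀ φ) := by
  intro n
  induction n with
  | zero => omega
  | succ n ih =>
    intro φ hφ
    constructor
    · intro h
      rcases ((tr_eval L e he v φ).mp h).1 with h1 | ⟨Γ, _, hidx, hT, hev⟩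
      · obtain ⟨ψ, hψe, hψT⟩ := (hv _).mp h1
        rwa [he hψe] at hψT
      · exact L.cut hT fun ψ hψ =>
          (ih ψ (by have := hidx ψ hψ; omega)).mp (hev ψ hψ)
    · intro h
      rw [tr_eval L e he]
      refine ⟨Or.inl ((hv _).mpr ⟨φ, rfl, h⟩), ?_⟩
      intro Γ hfin hidx χ hχ hT hev
      have hχT : L.Thm Γ₀ χ := by
        apply L.cut hT
        intro ρ hρ
        rw [Set.mem_insert_iff] at hρ
        rcases hρ with rfl | hρ
        · exact h
        · exact (ih ρ (by have := hidx ρ hρ; omega)).mp (hev ρ hρ)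
      exact (ih χ (by omega)).mpr hχT

end CpcUniv

/-- CPC is universal: every finitary deductive system over a countable set of formulas
can be conservatively translated into classical propositional logic. -/
theorem cpc_universal {F : Type} [Countable F]
    (L : DeductiveSystem F) (hfin : L.Finitary) :
    ∃ f : F → PropForm, ∀ (Γ : Set F) (φ : F), L.Thm Γ φ ↔ Cpc (f '' Γ) (f φ) := by
  obtain ⟨e, he⟩ := exists_injective_nat F
  refine ⟨CpcUniv.tr L e, fun Γ φ => ?_⟩
  constructor
  · intro hT v hvv
    obtain ⟨Γ', hΓ'sub, hΓ'fin, hT'⟩ := hfin Γ φ hT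
    apply CpcUniv.keyA L e he (e φ + 1) φ (by omega) Γ' hΓ'fin hT' v
    intro ψ hψ
    exact hvv _ (Set.mem_image_of_mem _ (hΓ'sub hψ))
  · intro hc
    classical
    set v : ℕ → Bool := fun n => decide (∃ ψ : F, e ψ = n ∧ L.Thm Γ ψ) with hvdef
    have hv : ∀ n, v n = true ↔ ∃ ψ : F, e ψ = n ∧ L.Thm Γ ψ := by
      intro n
      simp [hvdef]
    have hkey := CpcUniv.keyB L e he Γ v hv
    have h1 : (CpcUniv.tr L e φ).eval v = true := by
      apply hc v
      rw [Set.forall_mem_image]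
      intro ψ hψ
      exact (hkey (e ψ + 1) ψ (by omega)).mpr
        (L.mono (L.refl ψ) (Set.singleton_subset_iff.mpr hψ))
    exact (hkey (e φ + 1) φ (by omega)).mp h1
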